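/- Let B be a set partition of [m] and C a nonempty set partition of [n], and set A = B|C, r' = ℓ(B), r = ℓ(A) = r' + ℓ(C). For any nonempty subsets P ⊆ [r'] and Q ⊆ {r'+1,…,r} of block indices of A, std(A_{P∪Q}) = std(A_P) | std(A_Q). Consequently, if γ is a set composition of [r] with two consecutive blocks γ_{i−1} ⊆ [r'] and γ_i ⊆ {r'+1,…,r}, and φ(γ) is the set composition obtained by merging γ_{i−1} and γ_i into the single block γ_{i−1} ∪ γ_i, then γ[A] = φ(γ)[A]. -/
import Mathlib


open Finset

/-- `[n] = {1, …, n}` as a finset of naturals. -/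
def seg (n : ℕ) : Finset ℕ := Finset.Icc 1 n

/-- A (raw) collection of blocks. -/
abbrev Blocks := Finset (Finset ℕ)

/-- The ground set (union of the blocks). -/
def ground (A : Blocks) : Finset ℕ := A.sup id

/-- `A` is a set partition of the finite set `X`: nonempty pairwise disjoint blocks with union `X`. -/
def IsPartitionOf (A : Blocks) (X : Finset ℕ) : Prop :=
  (∀ B ∈ A, B.Nonempty) ∧ (A : Set (Finset ℕ)).PairwiseDisjoint id ∧ ground A = X

/-- `A` is a set partition of `[n]`. -/
def IsSP (A : Blocks) (n : ℕ) : Prop := IsPartitionOf A (seg n)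

/-- The unique increasing bijection from `X` onto `[#X]`. -/
def stdFun (X : Finset ℕ) (x : ℕ) : ℕ := (X.filter (· < x)).card + 1

/-- Standardization of a collection of blocks. -/
def stdP (A : Blocks) : Blocks := A.image fun B => B.image (stdFun (ground A))

/-- Shift all entries of all blocks up by `k`. -/
def shiftP (A : Blocks) (k : ℕ) : Blocks := A.image fun B => B.image (· + k)

/-- Concatenation `A | B` of set partitions: shift `B` up by the weight of `A`. -/
def concatP (A B : Blocks) : Blocks := A ∪ shiftP B (ground A).card

/-- The `i`-th block of `A` (1-based), where blocks are ordered by increasing minima. -/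
def blockAt (A : Blocks) (i : ℕ) : Finset ℕ :=
  (A.filter fun B => (A.filter fun C => C.min ≤ B.min).card = i).sup id

/-- `A_J` : the subcollection of blocks of `A` indexed by `J`. -/
def subColl (A : Blocks) (J : Finset ℕ) : Blocks := J.image (blockAt A)

/-- `A` is an atomic set partition of `[n]`. -/
def IsAtomicSP (A : Blocks) (n : ℕ) : Prop :=
  IsSP A n ∧ 1 ≤ n ∧
    ¬ ∃ m B C, 0 < m ∧ m < n ∧ IsSP B m ∧ IsSP C (n - m) ∧ A = concatP B C

/-- Raw set compositions: words whose letters are finsets of naturals. -/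
abbrev SComp := List (Finset ℕ)

/-- The union of the letters of a word. -/
def sunion (γ : SComp) : Finset ℕ := γ.foldr (· ∪ ·) ∅

/-- `γ` is a set composition of `K`. -/
def IsSCompOf (γ : SComp) (K : Finset ℕ) : Prop :=
  (∀ B ∈ γ, B.Nonempty) ∧ γ.Pairwise Disjoint ∧ sunion γ = K

/-- `γ[A] = std(A_{γ₁}) | std(A_{γ₂}) | ⋯ | std(A_{γₛ})`. -/
def applyComp (γ : SComp) (A : Blocks) : Blocks :=
  (γ.map fun g => stdP (subColl A g)).foldr concatP ∅

abbrev NCSym := Blocks →₀ ℚ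

/-- The basis element of `NCSym` indexed by a set partition. -/
noncomputable def bas (A : Blocks) : NCSym := Finsupp.single A 1

/-- `p(A) = ∑_{γ ∈ Γ'(r)} (-1)^{ℓ(γ)-1} γ[A]`. -/
noncomputable def pNC (A : Blocks) (r : ℕ) : NCSym :=
  ∑ᶠ γ ∈ {γ : SComp | IsSCompOf γ (seg r) ∧ 1 ∈ γ.headI},
    ((-1 : ℚ) ^ (γ.length - 1)) • bas (applyComp γ A)

open TensorProduct in
/-- `Δ(A) = ∑_{K ⊔ L = [r]} std(A_K) ⊗ std(A_L)` on a basis element. -/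
noncomputable def deltaB (A : Blocks) : NCSym ⊗[ℚ] NCSym :=
  ∑ K ∈ (seg A.card).powerset,
    bas (stdP (subColl A K)) ⊗ₜ[ℚ] bas (stdP (subColl A (seg A.card \ K)))

/-- The coproduct of `NCSym`, extended linearly. -/
noncomputable def Delta : NCSym →ₗ[ℚ] TensorProduct ℚ NCSym NCSym :=
  Finsupp.lsum ℚ fun A => LinearMap.toSpanSingleton ℚ _ (deltaB A)

section Aux

lemma mem_ground {A : Blocks} {x : ℕ} : x ∈ ground A ↔ ∃ X ∈ A, x ∈ X := by
  simp [ground, Finset.mem_sup]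

lemma subset_ground {A : Blocks} {X : Finset ℕ} (hX : X ∈ A) : X ⊆ ground A :=
  Finset.le_sup (f := id) hX

lemma ground_union (D E : Blocks) : ground (D ∪ E) = ground D ∪ ground E :=
  Finset.sup_union

lemma stdFun_injOn (X : Finset ℕ) : Set.InjOn (stdFun X) X := by
  intro a ha b hb hab
  by_contra hne
  rcases Nat.lt_or_ge a b with h | h
  · have h1 : (X.filter (· < a)).card < (X.filter (· < b)).card := by
      apply Finset.card_lt_card
      constructor
      · intro z hz
        simp only [Finset.mem_filter] at hz ⊢
        exact ⟨hz.1, hz.2.trans h⟩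
      · intro hsub
        have := hsub (Finset.mem_filter.mpr ⟨ha, h⟩)
        simp at this
    simp [stdFun] at hab; omega
  · rcases Nat.lt_or_ge b a with h' | h'
    · have h1 : (X.filter (· < b)).card < (X.filter (· < a)).card := by
        apply Finset.card_lt_card
        constructor
        · intro z hz
          simp only [Finset.mem_filter] at hz ⊢
          exact ⟨hz.1, hz.2.trans h'⟩
        · intro hsub
          have := hsub (Finset.mem_filter.mpr ⟨hb, h'⟩)
          simp at this
      simp [stdFun] at hab; omega
    · omega

lemma ground_stdP (D : Blocks) : ground (stdP D) = (ground D).image (stdFun (ground D)) := by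
  ext x
  simp only [mem_ground, stdP, Finset.mem_image]
  constructor
  · rintro ⟨X, ⟨Y, hY, rfl⟩, hx⟩
    rcases Finset.mem_image.mp hx with ⟨y, hy, rfl⟩
    exact ⟨y, ⟨Y, hY, hy⟩, rfl⟩
  · rintro ⟨y, ⟨Y, hY, hyY⟩, rfl⟩
    exact ⟨Y.image (stdFun (ground D)), ⟨Y, hY, rfl⟩, Finset.mem_image_of_mem _ hyY⟩

lemma stdFun_mem_seg {X : Finset ℕ} {x : ℕ} (hx : x ∈ X) : stdFun X x ∈ seg X.card := by
  have h1 : (X.filter (· < x)).card < X.card := by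
    apply Finset.card_lt_card
    refine ⟨Finset.filter_subset _ _, fun hsub => ?_⟩
    have := hsub hx
    simp at this
  simp [stdFun, seg, Finset.mem_Icc]; omega

lemma ground_stdP_eq_seg (D : Blocks) : ground (stdP D) = seg (ground D).card := by
  rw [ground_stdP]
  apply Finset.eq_of_subset_of_card_le
  · intro x hx
    rcases Finset.mem_image.mp hx with ⟨y, hy, rfl⟩
    exact stdFun_mem_seg hy
  · rw [Finset.card_image_of_injOn (stdFun_injOn _)]
    simp [seg]

lemma card_ground_stdP (D : Blocks) : (ground (stdP D)).card = (ground D).card := by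
  rw [ground_stdP_eq_seg]; simp [seg]

lemma ground_shiftP (D : Blocks) (k : ℕ) :
    ground (shiftP D k) = (ground D).image (· + k) := by
  ext x
  simp only [mem_ground, shiftP, Finset.mem_image]
  constructor
  · rintro ⟨X, ⟨Y, hY, rfl⟩, hx⟩
    rcases Finset.mem_image.mp hx with ⟨y, hy, rfl⟩
    exact ⟨y, ⟨Y, hY, hy⟩, rfl⟩
  · rintro ⟨y, ⟨Y, hY, hyY⟩, rfl⟩
    exact ⟨Y.image (· + k), ⟨Y, hY, rfl⟩, Finset.mem_image_of_mem _ hyY⟩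

lemma shiftP_union (D E : Blocks) (k : ℕ) :
    shiftP (D ∪ E) k = shiftP D k ∪ shiftP E k := Finset.image_union _ _

lemma shiftP_shiftP (D : Blocks) (j k : ℕ) :
    shiftP (shiftP D j) k = shiftP D (j + k) := by
  unfold shiftP
  rw [Finset.image_image]
  apply Finset.image_congr
  intro X _
  simp only [Function.comp_apply]
  rw [Finset.image_image]
  apply Finset.image_congr
  intro x _
  simp [Nat.add_assoc]

/-- Key lemma: standardization of a "separated" union is the concatenation of
standardizations. -/
lemma stdP_union_sep (D E : Blocks)
    (hsep : ∀ x ∈ ground D, ∀ y ∈ ground E, x < y) :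
    stdP (D ∪ E) = concatP (stdP D) (stdP E) := by
  have hg : ground (D ∪ E) = ground D ∪ ground E := ground_union D E
  have hdisj : Disjoint (ground D) (ground E) := by
    rw [Finset.disjoint_left]
    intro a haD haE
    exact absurd rfl (Nat.ne_of_lt (hsep a haD a haE))
  have hfl : ∀ x ∈ ground D, stdFun (ground (D ∪ E)) x = stdFun (ground D) x := by
    intro x hx
    rw [hg]
    unfold stdFun
    congr 1
    rw [Finset.filter_union]
    have : (ground E).filter (· < x) = ∅ := by
      rw [Finset.filter_eq_empty_iff]
      intro y hy
      exact not_lt.mpr (le_of_lt (hsep x hx y hy))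
    rw [this, Finset.union_empty]
  have hfr : ∀ x ∈ ground E, stdFun (ground (D ∪ E)) x
      = stdFun (ground E) x + (ground D).card := by
    intro x hx
    rw [hg]
    unfold stdFun
    rw [Finset.filter_union]
    have h1 : (ground D).filter (· < x) = ground D :=
      Finset.filter_eq_self.mpr fun y hy => hsep y hy x hx
    rw [h1, Finset.card_union_of_disjoint
      (Finset.disjoint_of_subset_right (Finset.filter_subset _ _) hdisj)]
    omega
  unfold concatP
  rw [card_ground_stdP]
  unfold stdP
  rw [Finset.image_union]
  congr 1
  · apply Finset.image_congr
    intro X hX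
    apply Finset.image_congr
    intro x hx
    exact hfl x (subset_ground hX hx)
  · unfold shiftP
    rw [Finset.image_image]
    apply Finset.image_congr
    intro X hX
    simp only [Function.comp_apply]
    rw [Finset.image_image]
    apply Finset.image_congr
    intro x hx
    simp only [Function.comp_apply]
    exact hfr x (subset_ground hX hx)

lemma concatP_assoc (X Y Z : Blocks) (a b : ℕ)
    (hX : ground X = seg a) (hY : ground Y = seg b) :
    concatP (concatP X Y) Z = concatP X (concatP Y Z) := by
  have hcard : ∀ c, (seg c).card = c := fun c => by simp [seg]
  have hgXY : ground (concatP X Y) = seg (a + b) := by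
    unfold concatP
    rw [ground_union, ground_shiftP, hX, hY, hcard]
    ext x
    simp only [Finset.mem_union, Finset.mem_image, seg, Finset.mem_Icc]
    constructor
    · rintro (h | ⟨y, hy, rfl⟩) <;> omega
    · rintro ⟨h1, h2⟩
      rcases le_or_gt x a with h | h
      · exact Or.inl ⟨h1, h⟩
      · exact Or.inr ⟨x - a, by omega, by omega⟩
  have hka : (ground X).card = a := by rw [hX, hcard]
  have hkb : (ground Y).card = b := by rw [hY, hcard]
  show (concatP X Y) ∪ shiftP Z (ground (concatP X Y)).card
      = X ∪ shiftP (Y ∪ shiftP Z (ground Y).card) (ground X).card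
  rw [hgXY, hcard, hka, hkb, shiftP_union, shiftP_shiftP]
  show (X ∪ shiftP Y (ground X).card) ∪ shiftP Z (a + b)
      = X ∪ (shiftP Y a ∪ shiftP Z (b + a))
  rw [hka, Finset.union_assoc, Nat.add_comm b a]

lemma subColl_union (A : Blocks) (P Q : Finset ℕ) :
    subColl A (P ∪ Q) = subColl A P ∪ subColl A Q := Finset.image_union _ _

end Aux

lemma applyComp_cons (g : Finset ℕ) (l : SComp) (A : Blocks) :
    applyComp (g :: l) A = concatP (stdP (subColl A g)) (applyComp l A) := by
  unfold applyComp
  rw [List.map_cons, List.foldr_cons]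

lemma merge_helper (A : Blocks) (g₁ g₂ : Finset ℕ)
    (hkey : stdP (subColl A (g₁ ∪ g₂)) = concatP (stdP (subColl A g₁)) (stdP (subColl A g₂))) :
    ∀ (δ₁ δ₂ : SComp),
      applyComp (δ₁ ++ g₁ :: g₂ :: δ₂) A = applyComp (δ₁ ++ (g₁ ∪ g₂) :: δ₂) A := by
  intro δ₁ δ₂
  induction δ₁ with
  | nil =>
    simp only [List.nil_append, applyComp_cons, hkey]
    exact (concatP_assoc (stdP (subColl A g₁)) (stdP (subColl A g₂))
      (applyComp δ₂ A) _ _ (ground_stdP_eq_seg _) (ground_stdP_eq_seg _)).symm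
  | cons g δ ih =>
    simp only [List.cons_append, applyComp_cons, ih]

/-- Let `A = B|C` with `B ⊢ [m]`, `C ⊢ [n]` nonempty, `r' = ℓ(B)`,
`r = ℓ(A) = r' + ℓ(C)`.  (i) For nonempty `P ⊆ [r']` and `Q ⊆ {r'+1,…,r}`,
`std(A_{P∪Q}) = std(A_P) | std(A_Q)`.  (ii) Hence merging two consecutive blocks
`γ_{i-1} ⊆ [r']` and `γ_i ⊆ {r'+1,…,r}` of a set composition `γ` of `[r]` does not change
`γ[A]`: `γ[A] = φ(γ)[A]`. -/
theorem ncsym_std_concat_merge (m n r' r : ℕ) (B C : Blocks)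
    (hB : IsSP B m) (hC : IsSP C n) (hCne : C ≠ ∅)
    (hr' : B.card = r') (hr : r = r' + C.card)
    (A : Blocks) (hA : A = concatP B C) :
    (∀ P Q : Finset ℕ, P.Nonempty → Q.Nonempty → P ⊆ seg r' → Q ⊆ Finset.Icc (r' + 1) r →
        stdP (subColl A (P ∪ Q)) = concatP (stdP (subColl A P)) (stdP (subColl A Q))) ∧
    (∀ (δ₁ δ₂ : SComp) (g₁ g₂ : Finset ℕ),
        IsSCompOf (δ₁ ++ g₁ :: g₂ :: δ₂) (seg r) → g₁ ⊆ seg r' → g₂ ⊆ Finset.Icc (r' + 1) r →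
        applyComp (δ₁ ++ g₁ :: g₂ :: δ₂) A = applyComp (δ₁ ++ (g₁ ∪ g₂) :: δ₂) A) := by
  -- setup
  set S : Blocks := shiftP C m with hS
  have hgB : ground B = seg m := hB.2.2
  have hAS : A = B ∪ S := by
    rw [hA]
    unfold concatP
    rw [hgB]
    simp [seg, hS]
  have hBm : ∀ X ∈ B, ∀ x ∈ X, x ≤ m := by
    intro X hX x hx
    have := subset_ground hX hx
    rw [hgB] at this
    exact (Finset.mem_Icc.mp this).2
  have hSm : ∀ Z ∈ S, ∀ z ∈ Z, m < z := by
    intro Z hZ z hz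
    rcases Finset.mem_image.mp hZ with ⟨Y, hY, rfl⟩
    rcases Finset.mem_image.mp hz with ⟨y, hy, rfl⟩
    have : y ∈ ground C := subset_ground hY hy
    rw [hC.2.2] at this
    have := (Finset.mem_Icc.mp this).1
    omega
  have hBne : ∀ X ∈ B, X.Nonempty := hB.1
  have hSne : ∀ Z ∈ S, Z.Nonempty := by
    intro Z hZ
    rcases Finset.mem_image.mp hZ with ⟨Y, hY, rfl⟩
    exact (hC.1 Y hY).image _
  have hZnotB : ∀ Z ∈ S, Z ∉ B := by
    intro Z hZ hZB
    rcases hSne Z hZ with ⟨z, hz⟩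
    exact absurd (hBm Z hZB z hz) (not_le.mpr (hSm Z hZ z hz))
  -- min comparisons
  have hminle : ∀ X ∈ B, ∀ Z ∈ S, X.min ≤ Z.min := by
    intro X hX Z hZ
    rcases hBne X hX with ⟨x, hx⟩
    apply Finset.le_min
    intro z hz
    calc X.min ≤ (x : WithTop ℕ) := Finset.min_le hx
    _ ≤ (z : WithTop ℕ) := by
        exact_mod_cast le_of_lt (lt_of_le_of_lt (hBm X hX x hx) (hSm Z hZ z hz))
  have hminnle : ∀ X ∈ B, ∀ Z ∈ S, ¬ (Z.min ≤ X.min) := by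
    intro X hX Z hZ h
    rcases hBne X hX with ⟨x, hx⟩
    have hZne := hSne Z hZ
    have h2 : Z.min ≤ (x : WithTop ℕ) := le_trans h (Finset.min_le hx)
    rw [← Finset.coe_min' hZne] at h2
    have h3 : Z.min' hZne ≤ x := WithTop.coe_le_coe.mp h2
    have := hSm Z hZ _ (Finset.min'_mem Z hZne)
    have := hBm X hX x hx
    omega
  -- rank bounds
  have hranklow : ∀ X ∈ B, (A.filter fun Y => Y.min ≤ X.min).card ≤ r' := by
    intro X hX
    have : A.filter (fun Y => Y.min ≤ X.min) ⊆ B := by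
      intro Y hY
      rw [hAS] at hY
      rcases Finset.mem_filter.mp hY with ⟨hYm, hle⟩
      rcases Finset.mem_union.mp hYm with h | h
      · exact h
      · exact absurd hle (hminnle X hX Y h)
    calc (A.filter fun Y => Y.min ≤ X.min).card ≤ B.card := Finset.card_le_card this
    _ = r' := hr'
  have hrankhigh : ∀ Z ∈ S, r' + 1 ≤ (A.filter fun Y => Y.min ≤ Z.min).card := by
    intro Z hZ
    have hsub : insert Z B ⊆ A.filter fun Y => Y.min ≤ Z.min := by
      intro Y hY
      rcases Finset.mem_insert.mp hY with rfl | h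
      · exact Finset.mem_filter.mpr ⟨by rw [hAS]; exact Finset.mem_union_right _ hZ, le_refl _⟩
      · exact Finset.mem_filter.mpr ⟨by rw [hAS]; exact Finset.mem_union_left _ h,
          hminle Y h Z hZ⟩
    calc r' + 1 = (insert Z B).card := by
          rw [Finset.card_insert_of_notMem (hZnotB Z hZ), hr']
    _ ≤ _ := Finset.card_le_card hsub
  -- block location
  have hblocklow : ∀ i ≤ r', ∀ x ∈ blockAt A i, x ≤ m := by
    intro i hi x hx
    unfold blockAt at hx
    rcases (Finset.mem_sup).mp hx with ⟨X, hX, hxX⟩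
    rcases Finset.mem_filter.mp hX with ⟨hXA, hXr⟩
    rw [hAS] at hXA
    rcases Finset.mem_union.mp hXA with h | h
    · exact hBm X h x hxX
    · have := hrankhigh X h
      omega
  have hblockhigh : ∀ i, r' + 1 ≤ i → ∀ x ∈ blockAt A i, m < x := by
    intro i hi x hx
    unfold blockAt at hx
    rcases (Finset.mem_sup).mp hx with ⟨X, hX, hxX⟩
    rcases Finset.mem_filter.mp hX with ⟨hXA, hXr⟩
    rw [hAS] at hXA
    rcases Finset.mem_union.mp hXA with h | h
    · have := hranklow X h
      omega
    · exact hSm X h x hxX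
  -- part (i) core, without nonemptiness
  have key : ∀ P Q : Finset ℕ, P ⊆ seg r' → Q ⊆ Finset.Icc (r' + 1) r →
      stdP (subColl A (P ∪ Q)) = concatP (stdP (subColl A P)) (stdP (subColl A Q)) := by
    intro P Q hP hQ
    rw [subColl_union]
    apply stdP_union_sep
    intro x hx y hy
    rcases mem_ground.mp hx with ⟨X, hX, hxX⟩
    rcases Finset.mem_image.mp hX with ⟨i, hi, rfl⟩
    rcases mem_ground.mp hy with ⟨Y, hY, hyY⟩
    rcases Finset.mem_image.mp hY with ⟨j, hj, rfl⟩
    have h1 : x ≤ m := hblocklow i (Finset.mem_Icc.mp (hP hi)).2 x hxX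
    have h2 : m < y := hblockhigh j (Finset.mem_Icc.mp (hQ hj)).1 y hyY
    omega
  refine ⟨fun P Q _ _ hP hQ => key P Q hP hQ, ?_⟩
  intro δ₁ δ₂ g₁ g₂ _ hg₁ hg₂
  exact merge_helper A g₁ g₂ (key g₁ g₂ hg₁ hg₂) δ₁ δ₂
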